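/- Let S be an n-qudit stabilizer group (odd prime p, order p^{n-k}) and ρ a single-qudit density matrix with Wigner function W(ρ;u,v). Then the probability of successful projection of ρ^{⊗n} onto the trivial-syndrome codespace equals tr(Π⁰_S ρ^{⊗n}) = Σ_{(⃗u|⃗v)∈S^⊥} ∏_{i=1}^n W(ρ; u_i, v_i), i.e. the complete weight enumerator of S^⊥ evaluated at the Wigner function entries. -/

import Mathlib

open scoped Classical BigOperators ComplexOrder
open Matrix

noncomputable def omegaP (p : ℕ) : ℂ := Complex.exp (2 * Real.pi * Complex.I / p)

noncomputable def omegaPow (p : ℕ) [NeZero p] (a : ZMod p) : ℂ := omegaP p ^ a.val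

noncomputable def Xop (p : ℕ) [NeZero p] : Matrix (ZMod p) (ZMod p) ℂ :=
  fun j k => if j = k + 1 then 1 else 0

noncomputable def Zop (p : ℕ) [NeZero p] : Matrix (ZMod p) (ZMod p) ℂ :=
  fun j k => if j = k then omegaPow p j else 0

/-- The Heisenberg-Weyl displacement operator `D(u,v) = ω^{-2⁻¹ u v} X^u Z^v`. -/
noncomputable def Dop (p : ℕ) [NeZero p] (u v : ZMod p) : Matrix (ZMod p) (ZMod p) ℂ :=
  omegaPow p (-(2 : ZMod p)⁻¹ * u * v) • (Xop p ^ u.val * Zop p ^ v.val)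

/-- The phase point operator `A(0,0) = p⁻¹ Σ_{u,v} D(u,v)`. -/
noncomputable def A0 (p : ℕ) [NeZero p] : Matrix (ZMod p) (ZMod p) ℂ :=
  (p : ℂ)⁻¹ • ∑ u : ZMod p, ∑ v : ZMod p, Dop p u v

/-- The phase point operator `A(u,v) = D(u,v) A(0,0) D(u,v)†`. -/
noncomputable def Aop (p : ℕ) [NeZero p] (u v : ZMod p) : Matrix (ZMod p) (ZMod p) ℂ :=
  Dop p u v * A0 p * (Dop p u v)ᴴ

/-- The discrete Wigner function `W(ρ; u,v) = p⁻¹ tr(ρ A(u,v))`. -/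
noncomputable def W1 (p : ℕ) [NeZero p] (ρ : Matrix (ZMod p) (ZMod p) ℂ) (u v : ZMod p) : ℂ :=
  (p : ℂ)⁻¹ * (ρ * Aop p u v).trace

/-- The space of symplectic vectors labelling `n`-qudit displacement operators. -/
abbrev Sympl (p n : ℕ) := (Fin n → ZMod p) × (Fin n → ZMod p)

/-- The symplectic inner product `[χ,χ'] = u·v' - u'·v`. -/
noncomputable def symp (p n : ℕ) [NeZero p] (χ χ' : Sympl p n) : ZMod p :=
  ∑ i, (χ.1 i * χ'.2 i - χ'.1 i * χ.2 i)

/-- The `n`-qudit displacement operator `D(u⃗,v⃗) = ⊗ᵢ D(uᵢ,vᵢ)` (entrywise product form). -/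
noncomputable def Dn (p n : ℕ) [NeZero p] (u v : Fin n → ZMod p) :
    Matrix (Fin n → ZMod p) (Fin n → ZMod p) ℂ :=
  fun j k => ∏ i, Dop p (u i) (v i) (j i) (k i)

/-- The `n`-qudit phase point operator `A(u⃗,v⃗) = ⊗ᵢ A(uᵢ,vᵢ)`. -/
noncomputable def An (p n : ℕ) [NeZero p] (u v : Fin n → ZMod p) :
    Matrix (Fin n → ZMod p) (Fin n → ZMod p) ℂ :=
  fun j k => ∏ i, Aop p (u i) (v i) (j i) (k i)

/-- The `n`-fold tensor power `ρ^{⊗n}`. -/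
noncomputable def tensorPow (p n : ℕ) [NeZero p] (ρ : Matrix (ZMod p) (ZMod p) ℂ) :
    Matrix (Fin n → ZMod p) (Fin n → ZMod p) ℂ :=
  fun j k => ∏ i, ρ (j i) (k i)

/-- The symplectic dual `S^⊥`: all symplectic vectors whose displacement operators commute
with every element of `S`. -/
noncomputable def Sperp (p n : ℕ) [NeZero p] (S : AddSubgroup (Sympl p n)) : Set (Sympl p n) :=
  {χ | ∀ χ' ∈ S, symp p n χ χ' = 0}

/-- The projector `Π⁰_S = p^{-(n-k)} Σ_{M ∈ S} M` onto the trivial-syndrome codespace. -/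
noncomputable def Pi0 (p n k : ℕ) [NeZero p] (S : AddSubgroup (Sympl p n)) :
    Matrix (Fin n → ZMod p) (Fin n → ZMod p) ℂ :=
  ((p : ℂ) ^ (n - k))⁻¹ • ∑ χ : S, Dn p n (χ : Sympl p n).1 (χ : Sympl p n).2

section Aux
variable (p : ℕ) [NeZero p]

lemma omegaP_prim : IsPrimitiveRoot (omegaP p) p :=
  Complex.isPrimitiveRoot_exp p (NeZero.ne p)

lemma omegaP_pow_p : omegaP p ^ p = 1 := (omegaP_prim p).pow_eq_one

lemma omegaP_pow_mod (m : ℕ) : omegaP p ^ (m % p) = omegaP p ^ m := by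
  conv_rhs => rw [← Nat.div_add_mod m p]
  rw [pow_add, pow_mul, omegaP_pow_p, one_pow, one_mul]

lemma omegaPow_zero : omegaPow p 0 = 1 := by simp [omegaPow]

lemma omegaPow_add (a b : ZMod p) :
    omegaPow p (a + b) = omegaPow p a * omegaPow p b := by
  rw [omegaPow, omegaPow, omegaPow, ← pow_add, ZMod.val_add, omegaP_pow_mod]

lemma omegaPow_sum {ι : Type*} (s : Finset ι) (f : ι → ZMod p) :
    omegaPow p (∑ i ∈ s, f i) = ∏ i ∈ s, omegaPow p (f i) := by
  induction s using Finset.cons_induction with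
  | empty => simp [omegaPow_zero]
  | cons i s hi ih => rw [Finset.sum_cons, Finset.prod_cons, omegaPow_add, ih]

lemma omegaPow_mul_neg (a : ZMod p) : omegaPow p a * omegaPow p (-a) = 1 := by
  rw [← omegaPow_add, add_neg_cancel, omegaPow_zero]

lemma omegaPow_ne_zero (a : ZMod p) : omegaPow p a ≠ 0 :=
  left_ne_zero_of_mul_eq_one (omegaPow_mul_neg p a)

lemma omegaPow_conj (a : ZMod p) :
    (starRingEnd ℂ) (omegaPow p a) = omegaPow p (-a) := by
  have habs : ‖omegaP p‖ = 1 := by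
    have h : (2 * (Real.pi:ℂ) * Complex.I / p) = ((2 * Real.pi / p : ℝ) : ℂ) * Complex.I := by
      push_cast; ring
    rw [omegaP, h]
    exact Complex.norm_exp_ofReal_mul_I _
  have h1 : omegaPow p a * (starRingEnd ℂ) (omegaPow p a) = 1 := by
    rw [Complex.mul_conj']
    rw [omegaPow, norm_pow, habs]
    norm_num
  have h2 := omegaPow_mul_neg p a
  have hne := omegaPow_ne_zero p a
  rw [← h2] at h1
  exact mul_left_cancel₀ hne h1


lemma omegaPow_eq_one_iff (hp1 : 1 < p) (a : ZMod p) :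
    omegaPow p a = 1 ↔ a = 0 := by
  constructor
  · intro h
    have := ((omegaP_prim p).pow_eq_one_iff_dvd a.val).mp h
    have hlt := ZMod.val_lt a
    exact (ZMod.val_eq_zero a).mp (Nat.eq_zero_of_dvd_of_lt this hlt)
  · rintro rfl; exact omegaPow_zero p

lemma sum_omegaPow_val (hp1 : 1 < p) : ∑ w : ZMod p, omegaPow p w = 0 := by
  have hne : omegaP p ≠ 1 := by
    intro h
    have := omegaPow_eq_one_iff p hp1 1
    rw [omegaPow, ZMod.val_one_eq_one_mod] at this
    have h1 : (1 : ZMod p) ≠ 0 := by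
      haveI : Fact (1 < p) := ⟨hp1⟩
      exact one_ne_zero
    exact h1 (this.mp (by rw [Nat.mod_eq_of_lt hp1, pow_one, h]))
  have hbij : ∑ w : ZMod p, omegaPow p w = ∑ m ∈ Finset.range p, omegaP p ^ m := by
    rw [Finset.sum_bij' (fun (w : ZMod p) _ => w.val) (fun (m : ℕ) _ => (m : ZMod p))]
    · intro w _; exact Finset.mem_range.mpr (ZMod.val_lt w)
    · intro m hm; exact Finset.mem_univ _
    · intro w _; simp [ZMod.natCast_val, ZMod.cast_id]
    · intro m hm; exact ZMod.val_cast_of_lt (Finset.mem_range.mp hm)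
    · intro w _; rfl
  rw [hbij, geom_sum_eq hne, omegaP_pow_p, sub_self, zero_div]

lemma char_sum (hp : p.Prime) (c : ZMod p) :
    ∑ v : ZMod p, omegaPow p (v * c) = if c = 0 then (p : ℂ) else 0 := by
  haveI : Fact p.Prime := ⟨hp⟩
  split_ifs with hc
  · subst hc; simp [omegaPow_zero]
  · have : ∑ v : ZMod p, omegaPow p (v * c) = ∑ w : ZMod p, omegaPow p w := by
      apply Finset.sum_nbij' (fun v => v * c) (fun w => w * c⁻¹) <;>
        intro a _ <;>
        simp [mul_assoc, ZMod.inv_mul_of_unit c (Ne.isUnit hc), ZMod.mul_inv_of_unit c (Ne.isUnit hc)]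
    rw [this, sum_omegaPow_val p hp.one_lt]


lemma Xpow_apply (m : ℕ) (j k : ZMod p) :
    (Xop p ^ m) j k = if j = k + (m : ZMod p) then 1 else 0 := by
  induction m generalizing j k with
  | zero => simp [Matrix.one_apply, eq_comm]
  | succ m ih =>
    rw [pow_succ, Matrix.mul_apply]
    simp only [ih, Xop]
    rw [Finset.sum_eq_single (k + 1)]
    · push_cast
      rw [if_pos rfl, mul_one]
      congr 1
      simp [add_comm, add_assoc, add_left_comm]
    · intro t _ ht
      rw [if_neg (fun h => ht h), mul_zero]
    · simp

lemma Zpow_apply (m : ℕ) (j k : ZMod p) :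
    (Zop p ^ m) j k = if j = k then omegaPow p ((m : ZMod p) * j) else 0 := by
  induction m generalizing j k with
  | zero => simp [Matrix.one_apply, omegaPow_zero]
  | succ m ih =>
    rw [pow_succ, Matrix.mul_apply]
    simp only [ih, Zop]
    rw [Finset.sum_eq_single k]
    · by_cases h : j = k
      · subst h
        simp only [if_pos rfl, eq_self_iff_true, if_true, ← omegaPow_add]
        congr 1
        push_cast
        ring
      · rw [if_neg h, if_neg h, zero_mul]
    · intro t _ ht
      rw [if_neg ht, mul_zero]
    · simp

lemma Dop_apply (u v j k : ZMod p) :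
    Dop p u v j k = if j = k + u then omegaPow p (v * k - (2 : ZMod p)⁻¹ * u * v) else 0 := by
  rw [Dop, Matrix.smul_apply, Matrix.mul_apply]
  rw [Finset.sum_eq_single k]
  · rw [Xpow_apply, Zpow_apply, if_pos rfl]
    simp only [ZMod.natCast_val, ZMod.cast_id]
    by_cases h : j = k + u
    · rw [if_pos h, if_pos h, one_mul, smul_eq_mul, ← omegaPow_add]
      congr 1
      ring
    · rw [if_neg h, if_neg h, zero_mul, smul_zero]
  · intro t _ ht
    simp [Zpow_apply, if_neg ht]
  · simp


end Aux

section Aux2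
variable (p : ℕ) [NeZero p]

lemma omegaPow_star (a : ZMod p) : star (omegaPow p a) = omegaPow p (-a) :=
  omegaPow_conj p a

lemma zmodTwo_ne_zero (hp : p.Prime) (hodd : Odd p) : (2 : ZMod p) ≠ 0 := by
  haveI : Fact p.Prime := ⟨hp⟩
  intro h
  have hdvd : (p : ℕ) ∣ 2 := by
    exact_mod_cast (ZMod.natCast_eq_zero_iff 2 p).mp (by exact_mod_cast h)
  have hp2 : p = 2 := (Nat.prime_dvd_prime_iff_eq hp Nat.prime_two).mp hdvd
  rw [hp2] at hodd
  exact absurd hodd (by decide)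

lemma two_inv_mul (hp : p.Prime) (hodd : Odd p) : (2 : ZMod p)⁻¹ * 2 = 1 := by
  haveI : Fact p.Prime := ⟨hp⟩
  exact inv_mul_cancel₀ (zmodTwo_ne_zero p hp hodd)

lemma A0_apply (hp : p.Prime) (hodd : Odd p) (j k : ZMod p) :
    A0 p j k = if j = 3 * k then 1 else 0 := by
  haveI : Fact p.Prime := ⟨hp⟩
  have h2i : (2:ZMod p)⁻¹ * 2 = 1 := two_inv_mul p hp hodd
  have hpc : (p : ℂ) ≠ 0 := Nat.cast_ne_zero.mpr (NeZero.ne p)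
  rw [A0, Matrix.smul_apply, Matrix.sum_apply]
  simp only [Matrix.sum_apply, Dop_apply]
  have hinner : ∀ u : ZMod p,
      (∑ v : ZMod p, if j = k + u then omegaPow p (v * k - (2:ZMod p)⁻¹ * u * v) else 0)
        = if u = j - k then (if j = 3 * k then (p : ℂ) else 0) else 0 := by
    intro u
    by_cases h : j = k + u
    · have hu : u = j - k := by rw [h]; ring
      simp only [if_pos h, if_pos hu]
      have he : ∀ v : ZMod p, omegaPow p (v * k - (2:ZMod p)⁻¹ * u * v)
          = omegaPow p (v * (k - (2:ZMod p)⁻¹ * u)) := fun v => by congr 1; ring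
      rw [Finset.sum_congr rfl (fun v _ => he v), char_sum p hp]
      by_cases hc : k - (2:ZMod p)⁻¹ * u = 0
      · rw [if_pos hc, if_pos (by linear_combination h + (-2 : ZMod p) * hc + (-u) * h2i)]
      · rw [if_neg hc, if_neg (fun hj : j = 3 * k => hc
          (by linear_combination ((2:ZMod p)⁻¹) * h - ((2:ZMod p)⁻¹) * hj + (-k) * h2i))]
    · have hun : ¬(u = j - k) := fun hh => h (by rw [hh]; ring)
      simp only [if_neg h, Finset.sum_const_zero, if_neg hun]
  rw [Finset.sum_congr rfl (fun u _ => hinner u), Finset.sum_ite_eq' Finset.univ (j - k)]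
  rw [if_pos (Finset.mem_univ _)]
  by_cases hj : j = 3 * k
  · rw [if_pos hj, if_pos hj, smul_eq_mul, inv_mul_cancel₀ hpc]
  · rw [if_neg hj, if_neg hj, smul_zero]

lemma Aop_apply (hp : p.Prime) (hodd : Odd p) (u v j k : ZMod p) :
    Aop p u v j k = if j = 3 * k - 2 * u then omegaPow p (2 * v * (k - u)) else 0 := by
  haveI : Fact p.Prime := ⟨hp⟩
  rw [Aop, Matrix.mul_apply]
  have hDA : ∀ t : ZMod p, (Dop p u v * A0 p) j t
      = if j = 3 * t + u then omegaPow p (v * (3 * t) - (2:ZMod p)⁻¹ * u * v) else 0 := by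
    intro t
    rw [Matrix.mul_apply]
    rw [Finset.sum_eq_single (3 * t)]
    · rw [Dop_apply, A0_apply p hp hodd, if_pos rfl, mul_one]
    · intro m _ hm
      rw [A0_apply p hp hodd, if_neg (fun h : m = 3 * t => hm h), mul_zero]
    · simp
  simp only [hDA, Matrix.conjTranspose_apply, Dop_apply, apply_ite star, star_zero,
    omegaPow_star]
  rw [Finset.sum_eq_single (k - u)]
  · by_cases h : j = 3 * k - 2 * u
    · rw [if_pos (by linear_combination h), if_pos (by ring), if_pos h, ← omegaPow_add]
      congr 1
      ring
    · rw [if_neg (fun hh : j = 3 * (k - u) + u => h (by linear_combination hh)), zero_mul,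
        if_neg h]
  · intro t _ ht
    rw [if_neg (fun h : k = t + u => ht (by rw [h]; ring)), mul_zero]
  · simp


lemma W1_formula (hp : p.Prime) (hodd : Odd p) (ρ : Matrix (ZMod p) (ZMod p) ℂ) (u v : ZMod p) :
    W1 p ρ u v = (p:ℂ)⁻¹ * ∑ c : ZMod p, ρ c (3*c - 2*u) * omegaPow p (2*v*(c - u)) := by
  rw [W1, Matrix.trace]
  congr 1
  unfold Matrix.diag
  simp only [Matrix.mul_apply, Aop_apply p hp hodd]
  refine Finset.sum_congr rfl (fun c _ => ?_)
  rw [Finset.sum_eq_single (3*c - 2*u)]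
  · rw [if_pos rfl]
  · intro d _ hd
    rw [if_neg hd, mul_zero]
  · simp

lemma traceD (hp : p.Prime) (hodd : Odd p) (ρ : Matrix (ZMod p) (ZMod p) ℂ) (a b : ZMod p) :
    (Dop p a b * ρ).trace
      = ∑ c : ZMod p, ρ c (c + a) * omegaPow p (b * c - (2:ZMod p)⁻¹ * a * b) := by
  rw [Matrix.trace]
  unfold Matrix.diag
  simp only [Matrix.mul_apply, Dop_apply]
  rw [Finset.sum_comm]
  refine Finset.sum_congr rfl (fun k _ => ?_)
  rw [Finset.sum_eq_single (k + a)]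
  · rw [if_pos rfl, mul_comm]
  · intro j _ hj
    rw [if_neg hj, zero_mul]
  · simp

lemma factC (hp : p.Prime) (hodd : Odd p) (ρ : Matrix (ZMod p) (ZMod p) ℂ) (a b : ZMod p) :
    (Dop p a b * ρ).trace
      = ∑ u : ZMod p, ∑ v : ZMod p, W1 p ρ u v * omegaPow p (u * b - a * v) := by
  haveI : Fact p.Prime := ⟨hp⟩
  have h2i : (2:ZMod p)⁻¹ * 2 = 1 := two_inv_mul p hp hodd
  have hpc : (p : ℂ) ≠ 0 := Nat.cast_ne_zero.mpr (NeZero.ne p)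
  rw [traceD p hp hodd]
  symm
  calc
    ∑ u : ZMod p, ∑ v : ZMod p, W1 p ρ u v * omegaPow p (u * b - a * v)
      = ∑ u : ZMod p, (p:ℂ)⁻¹ * ∑ c : ZMod p, ρ c (3*c - 2*u) * omegaPow p (u*b) *
          (if 2*(c-u) - a = 0 then (p:ℂ) else 0) := by
        refine Finset.sum_congr rfl fun u _ => ?_
        calc
          ∑ v : ZMod p, W1 p ρ u v * omegaPow p (u * b - a * v)
            = (p:ℂ)⁻¹ * ∑ v : ZMod p,
                (∑ c : ZMod p, ρ c (3*c - 2*u) * omegaPow p (2*v*(c - u)))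
                  * omegaPow p (u * b - a * v) := by
              rw [Finset.mul_sum]
              refine Finset.sum_congr rfl fun v _ => ?_
              rw [W1_formula p hp hodd, mul_assoc]
          _ = (p:ℂ)⁻¹ * ∑ v : ZMod p, ∑ c : ZMod p,
                ρ c (3*c - 2*u) * omegaPow p (u*b) * omegaPow p (v * (2*(c-u) - a)) := by
              congr 1
              refine Finset.sum_congr rfl fun v _ => ?_
              rw [Finset.sum_mul]
              refine Finset.sum_congr rfl fun c _ => ?_
              have h : omegaPow p (2*v*(c-u)) * omegaPow p (u*b - a*v)
                  = omegaPow p (u*b) * omegaPow p (v * (2*(c-u) - a)) := by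
                rw [← omegaPow_add, ← omegaPow_add]
                congr 1
                ring
              rw [mul_assoc, h, ← mul_assoc]
          _ = (p:ℂ)⁻¹ * ∑ c : ZMod p, ρ c (3*c - 2*u) * omegaPow p (u*b) *
                (∑ v : ZMod p, omegaPow p (v * (2*(c-u) - a))) := by
              rw [Finset.sum_comm]
              congr 1
              refine Finset.sum_congr rfl fun c _ => ?_
              rw [Finset.mul_sum]
          _ = (p:ℂ)⁻¹ * ∑ c : ZMod p, ρ c (3*c - 2*u) * omegaPow p (u*b) *
                (if 2*(c-u) - a = 0 then (p:ℂ) else 0) := by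
              congr 1
              refine Finset.sum_congr rfl fun c _ => ?_
              rw [char_sum p hp]
    _ = ∑ c : ZMod p, (p:ℂ)⁻¹ * (ρ c (3*c - 2*(c - (2:ZMod p)⁻¹*a)) *
          omegaPow p ((c - (2:ZMod p)⁻¹*a)*b) * (p:ℂ)) := by
        rw [← Finset.mul_sum, ← Finset.mul_sum]
        congr 1
        rw [Finset.sum_comm]
        refine Finset.sum_congr rfl fun c _ => ?_
        rw [Finset.sum_eq_single (c - (2:ZMod p)⁻¹*a)]
        · rw [if_pos (show 2*(c - (c - (2:ZMod p)⁻¹*a)) - a = 0 by linear_combination a * h2i)]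
        · intro u _ hu
          rw [if_neg (fun h : 2*(c-u) - a = 0 => hu
            (by linear_combination (-(2:ZMod p)⁻¹) * h + (c - u) * h2i)), mul_zero]
        · simp
    _ = ∑ c : ZMod p, ρ c (c + a) * omegaPow p (b * c - (2:ZMod p)⁻¹ * a * b) := by
        refine Finset.sum_congr rfl fun c _ => ?_
        have harg : 3*c - 2*(c - (2:ZMod p)⁻¹*a) = c + a := by linear_combination a * h2i
        have hexp : (c - (2:ZMod p)⁻¹*a)*b = b*c - (2:ZMod p)⁻¹*a*b := by ring
        rw [harg, hexp]
        field_simp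

end Aux2

section Aux3
variable (p n : ℕ) [NeZero p]

lemma symp_add_right (χ a b : Sympl p n) :
    symp p n χ (a + b) = symp p n χ a + symp p n χ b := by
  simp only [symp, Prod.fst_add, Prod.snd_add, Pi.add_apply, ← Finset.sum_add_distrib]
  exact Finset.sum_congr rfl fun i _ => by ring

lemma trace_Dn (u v : Fin n → ZMod p) (ρ : Matrix (ZMod p) (ZMod p) ℂ) :
    ((Dn p n u v) * tensorPow p n ρ).trace
      = ∏ i, (Dop p (u i) (v i) * ρ).trace := by
  have hR : ∀ i, (Dop p (u i) (v i) * ρ).trace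
      = ∑ x : ZMod p, ∑ y : ZMod p, Dop p (u i) (v i) x y * ρ y x := by
    intro i
    rw [Matrix.trace]
    unfold Matrix.diag
    simp only [Matrix.mul_apply]
  simp only [hR]
  rw [Matrix.trace]
  unfold Matrix.diag
  simp only [Matrix.mul_apply, Dn, tensorPow, ← Finset.prod_mul_distrib]
  calc
    ∑ j : Fin n → ZMod p, ∑ l : Fin n → ZMod p,
        ∏ i, (Dop p (u i) (v i) (j i) (l i) * ρ (l i) (j i))
      = ∑ j : Fin n → ZMod p, ∏ i, ∑ y : ZMod p,
          (Dop p (u i) (v i) (j i) y * ρ y (j i)) := by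
        exact Finset.sum_congr rfl fun j _ =>
          (Fintype.prod_sum (fun i y => Dop p (u i) (v i) (j i) y * ρ y (j i))).symm
    _ = ∏ i, ∑ x : ZMod p, ∑ y : ZMod p, Dop p (u i) (v i) x y * ρ y x :=
        (Fintype.prod_sum (fun i x => ∑ y : ZMod p, Dop p (u i) (v i) x y * ρ y x)).symm

lemma orth (hp : p.Prime) (S : AddSubgroup (Sympl p n)) (χ : Sympl p n) :
    ∑ χ' : S, omegaPow p (symp p n χ (χ' : Sympl p n))
      = if χ ∈ Sperp p n S then (Nat.card S : ℂ) else 0 := by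
  by_cases hmem : χ ∈ Sperp p n S
  · rw [if_pos hmem]
    have h1 : ∀ χ' : S, omegaPow p (symp p n χ (χ' : Sympl p n)) = 1 := fun χ' => by
      rw [hmem (χ' : Sympl p n) χ'.2, omegaPow_zero]
    rw [Finset.sum_congr rfl (fun χ' _ => h1 χ')]
    simp [Finset.card_univ, Nat.card_eq_fintype_card]
  · rw [if_neg hmem]
    have hex : ∃ χ₀ ∈ S, symp p n χ χ₀ ≠ 0 := by
      by_contra hcon
      push_neg at hcon
      exact hmem hcon
    obtain ⟨χ₀, hS, hne⟩ := hex
    have hω : omegaPow p (symp p n χ χ₀) ≠ 1 :=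
      fun h => hne ((omegaPow_eq_one_iff p hp.one_lt _).mp h)
    set T := ∑ χ' : S, omegaPow p (symp p n χ (χ' : Sympl p n)) with hT
    have hmul : omegaPow p (symp p n χ χ₀) * T = T := by
      rw [hT, Finset.mul_sum]
      have h2 : ∀ χ' : S, omegaPow p (symp p n χ χ₀) * omegaPow p (symp p n χ (χ' : Sympl p n))
          = omegaPow p (symp p n χ (((⟨χ₀, hS⟩ + χ' : S) : Sympl p n))) := by
        intro χ'
        rw [← omegaPow_add, AddSubgroup.coe_add, symp_add_right]
      rw [Finset.sum_congr rfl (fun χ' _ => h2 χ')]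
      exact Equiv.sum_comp (Equiv.addLeft (⟨χ₀, hS⟩ : S))
        (fun y : S => omegaPow p (symp p n χ (y : Sympl p n)))
    have hz : (omegaPow p (symp p n χ χ₀) - 1) * T = 0 := by
      rw [sub_mul, one_mul, hmul, sub_self]
    rcases mul_eq_zero.mp hz with h | h
    · exact absurd (sub_eq_zero.mp h) hω
    · exact h

end Aux3

/-- the acceptance probability `tr(Π⁰_S ρ^{⊗n})` equals the complete weight
enumerator of `S^⊥` evaluated at the Wigner-function entries of `ρ`. -/
theorem acceptance_probability_eq_weight_enumerator (p n k : ℕ) [NeZero p]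
    (hp : p.Prime) (hodd : Odd p) (hk : k ≤ n)
    (S : AddSubgroup (Sympl p n))
    (hcomm : ∀ χ ∈ S, ∀ χ' ∈ S, symp p n χ χ' = 0)
    (hcard : Nat.card S = p ^ (n - k))
    (ρ : Matrix (ZMod p) (ZMod p) ℂ) (hρ : ρ.PosSemidef) (hρtr : ρ.trace = 1) :
    (Pi0 p n k S * tensorPow p n ρ).trace =
      ∑ χ : ↥(Sperp p n S), ∏ i, W1 p ρ ((χ : Sympl p n).1 i) ((χ : Sympl p n).2 i) := by
  haveI : Fact p.Prime := ⟨hp⟩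
  have hpc : (p : ℂ) ≠ 0 := Nat.cast_ne_zero.mpr (NeZero.ne p)
  have hppow : ((p : ℂ) ^ (n - k)) ≠ 0 := pow_ne_zero _ hpc
  rw [Pi0, Matrix.smul_mul, Matrix.trace_smul, Matrix.sum_mul, Matrix.trace_sum]
  have step1 : ∀ A B : Fin n → ZMod p,
      (∏ i, ∑ a : ZMod p, ∑ b : ZMod p, W1 p ρ a b * omegaPow p (a * B i - A i * b))
        = ∑ χ : Sympl p n, (∏ i, W1 p ρ (χ.1 i) (χ.2 i)) * omegaPow p (symp p n χ (A, B)) := by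
    intro A B
    rw [Fintype.prod_sum
      (fun i a => ∑ b : ZMod p, W1 p ρ a b * omegaPow p (a * B i - A i * b))]
    rw [Finset.sum_congr rfl (fun U _ => Fintype.prod_sum
      (fun i b => W1 p ρ (U i) b * omegaPow p (U i * B i - A i * b)))]
    rw [Fintype.sum_prod_type]
    refine Finset.sum_congr rfl fun U _ => (Finset.sum_congr rfl fun V _ => ?_)
    rw [Finset.prod_mul_distrib, ← omegaPow_sum]
    rfl
  have hstep1 : ∀ χ' : S,
      (Dn p n (χ' : Sympl p n).1 (χ' : Sympl p n).2 * tensorPow p n ρ).trace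
        = ∑ χ : Sympl p n, (∏ i, W1 p ρ (χ.1 i) (χ.2 i)) *
            omegaPow p (symp p n χ (χ' : Sympl p n)) := by
    intro χ'
    rw [trace_Dn, Finset.prod_congr rfl (fun i _ => factC p hp hodd ρ _ _),
      step1 (χ' : Sympl p n).1 (χ' : Sympl p n).2]
  rw [Finset.sum_congr rfl (fun χ' _ => hstep1 χ'), Finset.sum_comm]
  have step2 : ∀ χ : Sympl p n,
      (∑ χ' : S, (∏ i, W1 p ρ (χ.1 i) (χ.2 i)) * omegaPow p (symp p n χ (χ' : Sympl p n)))
        = (∏ i, W1 p ρ (χ.1 i) (χ.2 i)) *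
            (if χ ∈ Sperp p n S then ((p:ℂ) ^ (n - k)) else 0) := by
    intro χ
    rw [← Finset.mul_sum, orth p n hp S χ, hcard, Nat.cast_pow]
  rw [Finset.sum_congr rfl (fun χ _ => step2 χ), smul_eq_mul, Finset.mul_sum]
  have step3 : ∀ χ : Sympl p n,
      ((p:ℂ) ^ (n - k))⁻¹ * ((∏ i, W1 p ρ (χ.1 i) (χ.2 i)) *
          (if χ ∈ Sperp p n S then ((p:ℂ) ^ (n - k)) else 0))
        = if χ ∈ Sperp p n S then (∏ i, W1 p ρ (χ.1 i) (χ.2 i)) else 0 := by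
    intro χ
    split_ifs with h
    · field_simp
    · simp
  rw [Finset.sum_congr rfl (fun χ _ => step3 χ), ← Finset.sum_filter]
  exact Finset.sum_subtype _ (by simp) _
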